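/- Suppose (X_n) is an increasing sequence of random variables with X_2 ≥ 2 such that conditionally on X_1,...,X_n, the event {X_{n+1} > X_n²} has probability at least c_3 > 0. Then there exists c_4 > 0 such that P(X_n ≥ 2^{2^{c_4 n}}) → 1 as n → ∞. -/

import Mathlib

open MeasureTheory Filter

lemma aux_det {Ω : Type*} (X : ℕ → Ω → ℕ)
    (hincr : ∀ n ω, X n ω + 1 ≤ X (n + 1) ω)
    (h2 : ∀ ω, 2 ≤ X 2 ω) (ω : Ω) :
    ∀ n, 2 ≤ n →
      2 ^ 2 ^ ((Finset.Ico 2 n).filter (fun k => (X k ω) ^ 2 < X (k + 1) ω)).card ≤ X n ω := by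
  intro n hn
  induction n, hn using Nat.le_induction with
  | base => simpa using h2 ω
  | succ n hn ih =>
    have hmem : n ∉ Finset.Ico 2 n := by simp
    rw [Nat.Ico_succ_right_eq_insert_Ico hn, Finset.filter_insert]
    by_cases hp : (X n ω) ^ 2 < X (n + 1) ω
    · rw [if_pos hp, Finset.card_insert_of_notMem (fun h => hmem (Finset.mem_of_mem_filter _ h))]
      calc 2 ^ 2 ^ (((Finset.Ico 2 n).filter (fun k => (X k ω) ^ 2 < X (k + 1) ω)).card + 1)
          = (2 ^ 2 ^ ((Finset.Ico 2 n).filter (fun k => (X k ω) ^ 2 < X (k + 1) ω)).card) ^ 2 := by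
            rw [pow_succ, pow_mul]
        _ ≤ (X n ω) ^ 2 := Nat.pow_le_pow_left ih 2
        _ ≤ X (n + 1) ω := hp.le
    · rw [if_neg hp]
      exact le_trans ih (le_trans (Nat.le_succ _) (hincr n ω))


/-- Doubly exponential growth: if `(Xₙ)` is a strictly increasing adapted sequence of
positive integers with `X₂ ≥ 2`, and conditionally on the past the event
`{X_{n+1} > Xₙ²}` has probability at least `c₃ > 0`, then there is `c₄ > 0` such that
`P(Xₙ ≥ 2^{2^{c₄ n}}) → 1` as `n → ∞`. -/
theorem doubly_exponential_growth {Ω : Type*} {m0 : MeasurableSpace Ω}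
    (μ : Measure Ω) [IsProbabilityMeasure μ]
    (𝔽 : Filtration ℕ m0) (X : ℕ → Ω → ℕ)
    (hadapted : Adapted 𝔽 X)
    (hincr : ∀ n ω, X n ω + 1 ≤ X (n + 1) ω)
    (h2 : ∀ ω, 2 ≤ X 2 ω)
    (c₃ : ℝ) (hc₃ : 0 < c₃)
    (hcond : ∀ n ≥ 2, ∀ᵐ ω ∂μ,
      c₃ ≤ (μ[(fun ω' => if (X n ω') ^ 2 < X (n + 1) ω' then (1 : ℝ) else 0) | 𝔽 n]) ω) :
    ∃ c₄ : ℝ, 0 < c₄ ∧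
      Tendsto (fun n : ℕ =>
          (μ {ω | (2 : ℝ) ^ ((2 : ℝ) ^ (c₄ * n)) ≤ (X n ω : ℝ)}).toReal)
        atTop (nhds 1) := by
  classical
  set f : ℕ → Ω → ℝ := fun k ω => if (X k ω) ^ 2 < X (k + 1) ω then (1 : ℝ) else 0 with hfdef
  -- basic measurability
  have hXm : ∀ k, Measurable[𝔽 (k + 1)] (X k) :=
    fun k => (hadapted k).mono (𝔽.mono (Nat.le_succ k)) le_rfl
  have hXm' : ∀ k, Measurable[𝔽 (k + 1)] (X (k + 1)) := fun k => hadapted (k + 1)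
  have hsm : ∀ k, MeasurableSet[𝔽 (k + 1)] {ω | (X k ω) ^ 2 < X (k + 1) ω} :=
    fun k => measurableSet_lt ((hXm k).pow_const 2) (hXm' k)
  have hfsm : ∀ k, StronglyMeasurable[𝔽 (k + 1)] (f k) := fun k =>
    (Measurable.ite (hsm k) measurable_const measurable_const).stronglyMeasurable
  have hfnn : ∀ k ω, 0 ≤ f k ω := by intro k ω; simp only [hfdef]; split <;> norm_num
  have hfle : ∀ k ω, f k ω ≤ 1 := by intro k ω; simp only [hfdef]; split <;> norm_num
  have hfint : ∀ k, Integrable (f k) μ := by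
    intro k
    refine Integrable.mono' (integrable_const 1) ((hfsm k).mono (𝔽.le _)).aestronglyMeasurable ?_
    filter_upwards with ω
    rw [Real.norm_eq_abs, abs_le]
    exact ⟨by linarith [hfnn k ω], hfle k ω⟩
  set g : ℕ → Ω → ℝ := fun k => μ[f k | 𝔽 k] with hgdef
  have hgint : ∀ k, Integrable (g k) μ := fun k => integrable_condExp
  have hgnn : ∀ k, 0 ≤ᵐ[μ] g k := fun k => condExp_nonneg (Filter.Eventually.of_forall (hfnn k))
  have hgle : ∀ k, g k ≤ᵐ[μ] fun _ => (1 : ℝ) := by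
    intro k
    have h1 : μ[f k | 𝔽 k] ≤ᵐ[μ] μ[(fun _ => (1 : ℝ)) | 𝔽 k] :=
      condExp_mono (hfint k) (integrable_const 1) (Filter.Eventually.of_forall (hfle k))
    calc g k ≤ᵐ[μ] μ[(fun _ => (1 : ℝ)) | 𝔽 k] := h1
      _ =ᵐ[μ] fun _ => (1 : ℝ) := by rw [condExp_const (𝔽.le k)]
  set d : ℕ → Ω → ℝ := fun k ω => f k ω - g k ω with hddef
  have hdint : ∀ k, Integrable (d k) μ := fun k => (hfint k).sub (hgint k)
  have hdsm : ∀ k, StronglyMeasurable[𝔽 (k + 1)] (d k) := fun k =>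
    (hfsm k).sub (stronglyMeasurable_condExp.mono (𝔽.mono (Nat.le_succ k)))
  have hdbd : ∀ k, ∀ᵐ ω ∂μ, |d k ω| ≤ 1 := by
    intro k
    filter_upwards [hgnn k, hgle k] with ω h1 h2
    simp only [Pi.zero_apply] at h1
    rw [abs_le]
    constructor
    · simp only [hddef]; linarith [hfnn k ω]
    · simp only [hddef]; linarith [hfle k ω]
  have hdce : ∀ k, μ[d k | 𝔽 k] =ᵐ[μ] 0 := by
    intro k
    have h1 : μ[d k | 𝔽 k] =ᵐ[μ] μ[f k | 𝔽 k] - μ[g k | 𝔽 k] := condExp_sub (hfint k) (hgint k) _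
    have h2 : μ[g k | 𝔽 k] = g k :=
      condExp_of_stronglyMeasurable (𝔽.le k) stronglyMeasurable_condExp (hgint k)
    filter_upwards [h1] with ω hω
    simp only [Pi.sub_apply, h2] at hω
    simp [hω, hgdef]
  -- products are integrable
  have hprodint : ∀ j k, Integrable (fun ω => d j ω * d k ω) μ := by
    intro j k
    refine Integrable.mono' (integrable_const 1)
      (((hdsm j).mono (𝔽.le _)).mul ((hdsm k).mono (𝔽.le _))).aestronglyMeasurable ?_
    filter_upwards [hdbd j, hdbd k] with ω h1 h2
    calc ‖d j ω * d k ω‖ = |d j ω| * |d k ω| := abs_mul _ _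
      _ ≤ 1 * 1 := mul_le_mul h1 h2 (abs_nonneg _) zero_le_one
      _ = 1 := mul_one 1
  -- orthogonality of increments
  have horth : ∀ j k, j + 1 ≤ k → ∫ ω, d j ω * d k ω ∂μ = 0 := by
    intro j k hjk
    have hdj : StronglyMeasurable[𝔽 k] (d j) := (hdsm j).mono (𝔽.mono hjk)
    have hint2 : Integrable (d j * d k) μ := hprodint j k
    have h1 : μ[d j * d k | 𝔽 k] =ᵐ[μ] d j * μ[d k | 𝔽 k] :=
      condExp_mul_of_stronglyMeasurable_left hdj hint2 (hdint k)
    have h2 : d j * μ[d k | 𝔽 k] =ᵐ[μ] 0 := by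
      filter_upwards [hdce k] with ω hω
      simp only [Pi.mul_apply, Pi.zero_apply] at hω ⊢
      rw [hω, mul_zero]
    calc ∫ ω, d j ω * d k ω ∂μ = ∫ ω, (μ[d j * d k | 𝔽 k]) ω ∂μ :=
          (integral_condExp (𝔽.le k)).symm
      _ = ∫ ω, (0 : Ω → ℝ) ω ∂μ := integral_congr_ae (h1.trans h2)
      _ = 0 := by simp
  -- second moment bound
  have hsq_le_one : ∀ j, ∫ ω, d j ω * d j ω ∂μ ≤ 1 := by
    intro j
    have : ∫ ω, d j ω * d j ω ∂μ ≤ ∫ _, (1 : ℝ) ∂μ := by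
      refine integral_mono_ae (hprodint j j) (integrable_const 1) ?_
      filter_upwards [hdbd j] with ω h1
      calc d j ω * d j ω = |d j ω| * |d j ω| := (abs_mul_abs_self _).symm
        _ ≤ 1 * 1 := mul_le_mul h1 h1 (abs_nonneg _) zero_le_one
        _ = 1 := mul_one 1
    simpa using this
  have hM2 : ∀ n : ℕ, ∫ ω, (∑ k ∈ Finset.Ico 2 n, d k ω) ^ 2 ∂μ ≤ (n : ℝ) := by
    intro n
    have hexp : ∀ ω, (∑ k ∈ Finset.Ico 2 n, d k ω) ^ 2 =
        ∑ j ∈ Finset.Ico 2 n, ∑ k ∈ Finset.Ico 2 n, d j ω * d k ω := by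
      intro ω
      rw [sq, Finset.sum_mul_sum]
    calc ∫ ω, (∑ k ∈ Finset.Ico 2 n, d k ω) ^ 2 ∂μ
        = ∫ ω, ∑ j ∈ Finset.Ico 2 n, ∑ k ∈ Finset.Ico 2 n, d j ω * d k ω ∂μ := by
          exact integral_congr_ae (Filter.Eventually.of_forall hexp)
      _ = ∑ j ∈ Finset.Ico 2 n, ∫ ω, ∑ k ∈ Finset.Ico 2 n, d j ω * d k ω ∂μ := by
          exact integral_finset_sum _ (fun j _ => integrable_finset_sum _ (fun k _ => hprodint j k))
      _ = ∑ j ∈ Finset.Ico 2 n, ∑ k ∈ Finset.Ico 2 n, ∫ ω, d j ω * d k ω ∂μ := by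
          refine Finset.sum_congr rfl (fun j _ => ?_)
          exact integral_finset_sum _ (fun k _ => hprodint j k)
      _ ≤ ∑ j ∈ Finset.Ico 2 n, (1 : ℝ) := by
          refine Finset.sum_le_sum (fun j hj => ?_)
          rw [Finset.sum_eq_single_of_mem j hj]
          · exact hsq_le_one j
          · intro k _ hkj
            rcases lt_or_gt_of_ne hkj with h | h
            · rw [show (fun ω => d j ω * d k ω) = (fun ω => d k ω * d j ω) from
                funext fun ω => mul_comm _ _]
              exact horth k j h
            · exact horth j k h
      _ = ((Finset.Ico 2 n).card : ℝ) := by simp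
      _ ≤ (n : ℝ) := by
          have : (Finset.Ico 2 n).card ≤ n := by rw [Nat.card_Ico]; omega
          exact_mod_cast this
  set M : ℕ → Ω → ℝ := fun n ω => ∑ k ∈ Finset.Ico 2 n, d k ω with hMdef
  have hMsqint : ∀ n, Integrable (fun ω => M n ω ^ 2) μ := by
    intro n
    have he : (fun ω => M n ω ^ 2) =
        fun ω => ∑ j ∈ Finset.Ico 2 n, ∑ k ∈ Finset.Ico 2 n, d j ω * d k ω :=
      funext fun ω => by simp only [hMdef]; rw [sq, Finset.sum_mul_sum]
    rw [he]
    exact integrable_finset_sum _ fun j _ => integrable_finset_sum _ fun k _ => hprodint j k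
  have hcheb : ∀ n : ℕ, 0 < c₃ * ((n : ℝ) - 2) / 2 →
      (μ {ω | c₃ * ((n : ℝ) - 2) / 2 ≤ |M n ω|}).toReal ≤
        (n : ℝ) / (c₃ * ((n : ℝ) - 2) / 2) ^ 2 := by
    intro n ht
    set t := c₃ * ((n : ℝ) - 2) / 2 with htdef
    have hset : {ω | t ≤ |M n ω|} = {x | t ^ 2 ≤ (fun ω => M n ω ^ 2) x} := by
      ext ω
      simp only [Set.mem_setOf_eq]
      rw [← sq_abs (M n ω)]
      exact (pow_le_pow_iff_left₀ ht.le (abs_nonneg _) two_ne_zero).symm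
    have hmark := mul_meas_ge_le_integral_of_nonneg
      (f := fun ω => M n ω ^ 2) (μ := μ)
      (Filter.Eventually.of_forall fun ω => sq_nonneg _) (hMsqint n) (t ^ 2)
    rw [hset, le_div_iff₀ (by positivity)]
    calc (μ {x | t ^ 2 ≤ (fun ω => M n ω ^ 2) x}).toReal * t ^ 2
        = t ^ 2 * (μ {x | t ^ 2 ≤ (fun ω => M n ω ^ 2) x}).toReal := mul_comm _ _
      _ ≤ ∫ ω, M n ω ^ 2 ∂μ := hmark
      _ ≤ (n : ℝ) := hM2 n
  set cnt : ℕ → Ω → ℕ :=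
    fun n ω => ((Finset.Ico 2 n).filter (fun k => (X k ω) ^ 2 < X (k + 1) ω)).card with hcntdef
  have hcnt_sum : ∀ n ω, ((cnt n ω : ℝ)) = ∑ k ∈ Finset.Ico 2 n, f k ω := by
    intro n ω
    simp only [hcntdef, hfdef]
    rw [Finset.sum_boole]
  have hgood_meas : ∀ (n : ℕ) (t : ℝ), MeasurableSet {ω | t ≤ (cnt n ω : ℝ)} := by
    intro n t
    have hm : Measurable fun ω => ((cnt n ω : ℝ)) := by
      have he : (fun ω => ((cnt n ω : ℝ))) = fun ω => ∑ k ∈ Finset.Ico 2 n, f k ω :=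
        funext (hcnt_sum n)
      rw [he]
      exact Finset.measurable_sum _ fun k _ => ((hfsm k).mono (𝔽.le _)).measurable
    exact measurableSet_le measurable_const hm
  have hg_all : ∀ᵐ ω ∂μ, ∀ k : ℕ, 2 ≤ k → c₃ ≤ g k ω := by
    rw [ae_all_iff]
    intro k
    by_cases hk : 2 ≤ k
    · filter_upwards [hcond k hk] with ω h _
      exact h
    · filter_upwards with ω h
      exact absurd h hk
  have hincl : ∀ n : ℕ, 2 ≤ n →
      {ω | (cnt n ω : ℝ) < c₃ * ((n : ℝ) - 2) / 2} ≤ᵐ[μ]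
        {ω | c₃ * ((n : ℝ) - 2) / 2 ≤ |M n ω|} := by
    intro n hn
    filter_upwards [hg_all] with ω hg hmem
    replace hmem : (cnt n ω : ℝ) < c₃ * ((n : ℝ) - 2) / 2 := hmem
    show c₃ * ((n : ℝ) - 2) / 2 ≤ |M n ω|
    have hcard : ((Finset.Ico 2 n).card : ℝ) = (n : ℝ) - 2 := by
      rw [Nat.card_Ico, Nat.cast_sub hn]
      norm_num
    have hsumg : c₃ * ((n : ℝ) - 2) ≤ ∑ k ∈ Finset.Ico 2 n, g k ω := by
      calc c₃ * ((n : ℝ) - 2) = ∑ _k ∈ Finset.Ico 2 n, c₃ := by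
            rw [Finset.sum_const, nsmul_eq_mul, hcard, mul_comm]
        _ ≤ ∑ k ∈ Finset.Ico 2 n, g k ω :=
            Finset.sum_le_sum fun k hk => hg k (Finset.mem_Ico.1 hk).1
    have hMeq : M n ω = (cnt n ω : ℝ) - ∑ k ∈ Finset.Ico 2 n, g k ω := by
      simp only [hMdef, hddef]
      rw [Finset.sum_sub_distrib, hcnt_sum]
    have hMle : M n ω ≤ -(c₃ * ((n : ℝ) - 2) / 2) := by
      rw [hMeq]; linarith
    calc c₃ * ((n : ℝ) - 2) / 2 ≤ -(M n ω) := by linarith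
      _ ≤ |M n ω| := neg_le_abs _
  refine ⟨c₃ / 4, by positivity, ?_⟩
  have hupper : ∀ n : ℕ,
      (μ {ω | (2 : ℝ) ^ ((2 : ℝ) ^ (c₃ / 4 * n)) ≤ (X n ω : ℝ)}).toReal ≤ 1 := by
    intro n
    calc (μ {ω | (2 : ℝ) ^ ((2 : ℝ) ^ (c₃ / 4 * n)) ≤ (X n ω : ℝ)}).toReal
        ≤ (μ Set.univ).toReal :=
          ENNReal.toReal_mono (by simp) (measure_mono (Set.subset_univ _))
      _ = 1 := by simp
  have hlower : ∀ n : ℕ, 4 ≤ n →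
      1 - (n : ℝ) / (c₃ * ((n : ℝ) - 2) / 2) ^ 2 ≤
        (μ {ω | (2 : ℝ) ^ ((2 : ℝ) ^ (c₃ / 4 * n)) ≤ (X n ω : ℝ)}).toReal := by
    intro n hn
    have hn2 : (2 : ℕ) ≤ n := by omega
    have hnR : (4 : ℝ) ≤ (n : ℝ) := by exact_mod_cast hn
    have hn2R : (0 : ℝ) < (n : ℝ) - 2 := by linarith
    set t := c₃ * ((n : ℝ) - 2) / 2 with htdef
    have htpos : 0 < t := by positivity
    set good := {ω | t ≤ (cnt n ω : ℝ)} with hgooddef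
    have hgood_sub : good ⊆ {ω | (2 : ℝ) ^ ((2 : ℝ) ^ (c₃ / 4 * n)) ≤ (X n ω : ℝ)} := by
      intro ω hω
      simp only [hgooddef, Set.mem_setOf_eq] at hω ⊢
      have hc4 : c₃ / 4 * n ≤ (cnt n ω : ℝ) := by
        refine le_trans ?_ hω
        rw [htdef]
        nlinarith [hc₃.le]
      have hdet : 2 ^ 2 ^ (cnt n ω) ≤ X n ω := aux_det X hincr h2 ω n hn2
      calc (2 : ℝ) ^ ((2 : ℝ) ^ (c₃ / 4 * n))
          ≤ (2 : ℝ) ^ ((2 : ℝ) ^ ((cnt n ω : ℕ) : ℝ)) := by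
            apply Real.rpow_le_rpow_of_exponent_le one_le_two
            exact Real.rpow_le_rpow_of_exponent_le one_le_two hc4
        _ = ((2 ^ 2 ^ (cnt n ω) : ℕ) : ℝ) := by
            rw [Real.rpow_natCast 2 (cnt n ω),
              show ((2 : ℝ) ^ (cnt n ω)) = (((2 ^ (cnt n ω) : ℕ)) : ℝ) from by push_cast; ring,
              Real.rpow_natCast]
            push_cast
            ring
        _ ≤ (X n ω : ℝ) := by exact_mod_cast hdet
    have hsplit : (μ good).toReal + (μ goodᶜ).toReal = 1 := by
      rw [← ENNReal.toReal_add (measure_ne_top μ _) (measure_ne_top μ _),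
        measure_add_measure_compl (hgood_meas n t)]
      simp
    have hbadle : (μ goodᶜ).toReal ≤ (n : ℝ) / t ^ 2 := by
      have h1 : goodᶜ ≤ᵐ[μ] {ω | t ≤ |M n ω|} := by
        have he : goodᶜ = {ω | (cnt n ω : ℝ) < t} := by
          ext ω; simp [hgooddef, not_le]
        filter_upwards [hincl n hn2] with ω hω hmem
        exact hω (by have hm' : ω ∈ goodᶜ := hmem; rw [he] at hm'; exact hm')
      calc (μ goodᶜ).toReal ≤ (μ {ω | t ≤ |M n ω|}).toReal :=
            ENNReal.toReal_mono (measure_ne_top μ _) (measure_mono_ae h1)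
        _ ≤ (n : ℝ) / t ^ 2 := hcheb n htpos
    calc 1 - (n : ℝ) / t ^ 2 ≤ 1 - (μ goodᶜ).toReal := by linarith
      _ = (μ good).toReal := by linarith
      _ ≤ (μ {ω | (2 : ℝ) ^ ((2 : ℝ) ^ (c₃ / 4 * n)) ≤ (X n ω : ℝ)}).toReal :=
          ENNReal.toReal_mono (measure_ne_top μ _) (measure_mono hgood_sub)
  have hb0 : Tendsto (fun n : ℕ => (n : ℝ) / (c₃ * ((n : ℝ) - 2) / 2) ^ 2) atTop (nhds 0) := by
    have h1 : Tendsto (fun n : ℕ => (n : ℝ) - 2) atTop atTop := by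
      have := tendsto_atTop_add_const_right atTop (-2 : ℝ) tendsto_natCast_atTop_atTop
      simpa [sub_eq_add_neg] using this
    have haux : Tendsto (fun n : ℕ => (8 / c₃ ^ 2) * ((n : ℝ) - 2)⁻¹) atTop (nhds 0) := by
      simpa using (h1.inv_tendsto_atTop).const_mul (8 / c₃ ^ 2)
    refine tendsto_of_tendsto_of_tendsto_of_le_of_le' tendsto_const_nhds haux ?_ ?_
    · filter_upwards [eventually_ge_atTop 3] with n hn
      have hnR : (3 : ℝ) ≤ (n : ℝ) := by exact_mod_cast hn
      have : (0 : ℝ) < (n : ℝ) - 2 := by linarith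
      positivity
    · filter_upwards [eventually_ge_atTop 4] with n hn
      have hnR : (4 : ℝ) ≤ (n : ℝ) := by exact_mod_cast hn
      have h2' : (0 : ℝ) < (n : ℝ) - 2 := by linarith
      rw [div_le_iff₀ (by positivity)]
      have he : (8 / c₃ ^ 2) * ((n : ℝ) - 2)⁻¹ * (c₃ * ((n : ℝ) - 2) / 2) ^ 2 =
          2 * ((n : ℝ) - 2) := by
        field_simp
        ring
      rw [he]
      linarith
  have hl1 : Tendsto (fun n : ℕ => 1 - (n : ℝ) / (c₃ * ((n : ℝ) - 2) / 2) ^ 2) atTop (nhds 1) := by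
    have := (tendsto_const_nhds (x := (1 : ℝ)) (f := atTop)).sub hb0
    simpa using this
  refine tendsto_of_tendsto_of_tendsto_of_le_of_le' hl1 tendsto_const_nhds ?_ ?_
  · filter_upwards [eventually_ge_atTop 4] with n hn
    exact hlower n hn
  · filter_upwards with n
    exact hupper n
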